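/- Let X = ω₁ with the order topology. There exists a neighborhood assignment U on X such that no neighborhood assignment V on X satisfies VV ⊆ U. Hence the universal pre-uniformity on ω₁ is not equal to its square. -/

import Mathlib

open Set

namespace Stmt11

def rcomp {X : Type*} (U V : Set (X × X)) : Set (X × X) :=
  {p | ∃ y, (p.1, y) ∈ U ∧ (y, p.2) ∈ V}

def IsNbhdAssignment {X : Type*} [TopologicalSpace X] (U : Set (X × X)) : Prop :=
  ∀ x : X, {y | (x, y) ∈ U} ∈ nhds x

variable {X : Type*} [LinearOrder X]

structure Amb (X : Type*) [LinearOrder X] : Prop where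
  wf : WellFounded ((· < ·) : X → X → Prop)
  cnt : ∀ x : X, (Set.Iio x).Countable
  big : ¬(Set.univ : Set X).Countable
  nomax : ∀ x : X, ∃ y, x < y

namespace Amb

theorem nonempty (H : Amb X) : Nonempty X := by
  by_contra h
  refine H.big ?_
  have : Set.univ (α := X) = ∅ := by
    ext x; exact ⟨fun _ => (h ⟨x⟩).elim, fun hx => hx.elim⟩
  rw [this]; exact Set.countable_empty

theorem cntIic (H : Amb X) (x : X) : (Set.Iic x).Countable := by
  have : Set.Iic x ⊆ Set.Iio x ∪ {x} := by
    intro y hy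
    rcases lt_or_eq_of_le (hy : y ≤ x) with h | h
    · exact Or.inl h
    · exact Or.inr h
  exact Set.Countable.mono this ((H.cnt x).union (Set.countable_singleton x))

theorem bdd (H : Amb X) {A : Set X} (hA : A.Countable) : ∃ b, ∀ a ∈ A, a ≤ b := by
  by_contra hb
  push_neg at hb
  refine H.big (Set.Countable.mono ?_ (hA.biUnion fun a _ => H.cntIic a))
  intro x _
  obtain ⟨a, ha, hxa⟩ := hb x
  exact Set.mem_biUnion ha (le_of_lt hxa)

/-- A strict upper bound for a countable set. -/
theorem sbd (H : Amb X) {A : Set X} (hA : A.Countable) : ∃ b, ∀ a ∈ A, a < b := by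
  obtain ⟨b, hb⟩ := H.bdd hA
  obtain ⟨c, hc⟩ := H.nomax b
  exact ⟨c, fun a ha => lt_of_le_of_lt (hb a ha) hc⟩

/-- least-upper-bound facts for a sequence -/
theorem lub_spec (H : Amb X) (g : ℕ → X) :
    ∃ x, (∀ n, g n ≤ x) ∧ ∀ b, b < x → ∃ n, b < g n := by
  obtain ⟨b, hb⟩ := H.bdd (Set.countable_range g)
  have hne : (upperBounds (Set.range g)).Nonempty :=
    ⟨b, fun y hy => by obtain ⟨n, rfl⟩ := hy; exact hb _ ⟨n, rfl⟩⟩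
  refine ⟨H.wf.min _ hne, fun n => H.wf.min_mem _ hne ⟨n, rfl⟩, fun c hc => ?_⟩
  by_contra hno
  push_neg at hno
  exact H.wf.not_lt_min _ (fun y hy => by obtain ⟨n, rfl⟩ := hy; exact hno n) hc

end Amb

/-- `x` is an accumulation point (from below) of `C`. -/
def IsAcc (C : Set X) (x : X) : Prop :=
  (∃ a, a < x) ∧ ∀ a < x, ∃ c ∈ C, a < c ∧ c < x

def IsClub (C : Set X) : Prop :=
  (∀ x, IsAcc C x → x ∈ C) ∧ ∀ a, ∃ c ∈ C, a < c

def IsStat (S : Set X) : Prop := ∀ C, IsClub C → (S ∩ C).Nonempty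

theorem IsAcc.mono {C D : Set X} {x : X} (h : IsAcc C x) (hCD : C ⊆ D) : IsAcc D x :=
  ⟨h.1, fun a ha => by obtain ⟨c, hc, h1, h2⟩ := h.2 a ha; exact ⟨c, hCD hc, h1, h2⟩⟩

theorem IsStat.mono {S T : Set X} (h : IsStat S) (hST : S ⊆ T) : IsStat T := fun C hC => by
  obtain ⟨x, hx1, hx2⟩ := h C hC
  exact ⟨x, hST hx1, hx2⟩

/-- Master recursion lemma. -/
theorem master (H : Amb X) {ι : Type*} (P : ι → Set X) (J : X → Set ι)
    (hP : ∀ i y, ∃ t ∈ P i, y < t)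
    (hJc : ∀ y, (J y).Countable)
    (hJm : ∀ ⦃y z : X⦄, y ≤ z → J y ⊆ J z) (a : X) :
    ∃ x, a < x ∧ (∀ b < x, ∃ c, b < c ∧ c < x) ∧
      ∀ i, (∃ y, y < x ∧ i ∈ J y) → IsAcc (P i) x := by
  classical
  -- next i y : an element of P i above y
  have hnext : ∀ i y, (fun i y => (hP i y).choose) i y ∈ P i ∧ y < (hP i y).choose :=
    fun i y => ⟨(hP i y).choose_spec.1, (hP i y).choose_spec.2⟩
  set next : ι → X → X := fun i y => (hP i y).choose with hnextdef
  -- the step function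
  have hstepex : ∀ y : X, ∃ z, y < z ∧ ∀ i ∈ J y, next i y < z := by
    intro y
    obtain ⟨b, hb⟩ := H.sbd (((hJc y).image (fun i => next i y)).union (Set.countable_singleton y))
    exact ⟨b, hb y (Or.inr rfl), fun i hi => hb _ (Or.inl ⟨i, hi, rfl⟩)⟩
  set step : X → X := fun y => (hstepex y).choose with hstepdef
  have hstep1 : ∀ y, y < step y := fun y => (hstepex y).choose_spec.1
  have hstep2 : ∀ y, ∀ i ∈ J y, next i y < step y := fun y => (hstepex y).choose_spec.2
  set g : ℕ → X := fun n => step^[n+1] a with hg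
  have hgsucc : ∀ n, g (n + 1) = step (g n) := by
    intro n
    simp only [hg, Function.iterate_succ_apply']
  have hgmono : ∀ m n, m < n → g m < g n := by
    intro m n h
    induction n with
    | zero => omega
    | succ k ih =>
      rcases Nat.lt_succ_iff_lt_or_eq.1 h with h' | h'
      · exact lt_trans (ih h') (by rw [hgsucc]; exact hstep1 _)
      · subst h'; rw [hgsucc]; exact hstep1 _
  obtain ⟨x, hub, hlx⟩ := H.lub_spec g
  have hgx : ∀ n, g n < x := fun n => lt_of_lt_of_le (hgmono n (n+1) (Nat.lt_succ_self n)) (hub _)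
  have hax : a < x := lt_trans (hstep1 a) (hgx 0)
  refine ⟨x, hax, ?_, ?_⟩
  · intro b hb
    obtain ⟨n, hn⟩ := hlx b hb
    exact ⟨g n, hn, hgx n⟩
  · rintro i ⟨y, hyx, hiy⟩
    refine ⟨⟨a, hax⟩, ?_⟩
    intro b hb
    obtain ⟨n1, hn1⟩ := hlx b hb
    obtain ⟨n2, hn2⟩ := hlx y hyx
    have hgmono' : ∀ m n : ℕ, m ≤ n → g m ≤ g n := by
      intro m n h
      rcases lt_or_eq_of_le h with h | h
      · exact le_of_lt (hgmono m n h)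
      · exact le_of_eq (by rw [h])
    set n := max n1 n2 with hn
    have hbn : b < g n := lt_of_lt_of_le hn1 (hgmono' _ _ (le_max_left _ _))
    have hyn : y ≤ g n := le_of_lt (lt_of_lt_of_le hn2 (hgmono' _ _ (le_max_right _ _)))
    have hin : i ∈ J (g n) := hJm hyn hiy
    refine ⟨next i (g n), (hnext i (g n)).1, lt_trans hbn (hnext i (g n)).2, ?_⟩
    calc next i (g n) < step (g n) := hstep2 _ _ hin
      _ = g (n + 1) := (hgsucc n).symm
      _ < x := hgx (n + 1)


theorem isClub_Ioi (H : Amb X) (a : X) : IsClub (Set.Ioi a) := by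
  constructor
  · rintro x ⟨⟨b, hb⟩, hacc⟩
    obtain ⟨c, hc, _, hcx⟩ := hacc b hb
    exact lt_trans hc hcx
  · intro b
    obtain ⟨c, hc⟩ := H.nomax (max a b)
    exact ⟨c, lt_of_le_of_lt (le_max_left _ _) hc, lt_of_le_of_lt (le_max_right _ _) hc⟩

/-- A stationary set is unbounded. -/
theorem IsStat.unbdd (H : Amb X) {S : Set X} (hS : IsStat S) : ∀ a, ∃ t ∈ S, a < t := by
  intro a
  obtain ⟨t, ht, hta⟩ := hS _ (isClub_Ioi H a)
  exact ⟨t, ht, hta⟩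

/-- Countable intersections of clubs are clubs. -/
theorem isClub_iInter (H : Amb X) (C : ℕ → Set X) (hC : ∀ n, IsClub (C n)) :
    IsClub (⋂ n, C n) := by
  constructor
  · intro x hx
    refine Set.mem_iInter.2 fun n => (hC n).1 x (hx.mono ?_)
    exact Set.iInter_subset _ n
  · intro a
    obtain ⟨x, hax, _, hacc⟩ := master H C (fun _ => (Set.univ : Set ℕ))
      (fun i y => (hC i).2 y) (fun _ => Set.countable_univ) (fun _ _ _ => le_refl _) a
    refine ⟨x, Set.mem_iInter.2 fun n => (hC n).1 x (hacc n ⟨a, hax, trivial⟩), hax⟩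

theorem IsClub.inter (H : Amb X) {C D : Set X} (hC : IsClub C) (hD : IsClub D) :
    IsClub (C ∩ D) := by
  have h := isClub_iInter H (fun n => if n = 0 then C else D)
    (fun n => by by_cases h : n = 0 <;> simp [h, hC, hD])
  have heq : (⋂ n, if n = 0 then C else D) = C ∩ D := by
    ext x
    simp only [Set.mem_iInter, Set.mem_inter_iff]
    constructor
    · intro hx; exact ⟨by simpa using hx 0, by simpa using hx 1⟩
    · rintro ⟨h1, h2⟩ n; by_cases h : n = 0 <;> simp [h, h1, h2]
  rwa [heq] at h

theorem IsClub.isStat (H : Amb X) {C : Set X} (hC : IsClub C) : IsStat C := by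
  intro D hD
  obtain ⟨a⟩ := H.nonempty
  obtain ⟨c, hc, _⟩ := (hC.inter H hD).2 a
  exact ⟨c, hc⟩

/-- The diagonal intersection of clubs is a club. -/
theorem isClub_diag (H : Amb X) (C : X → Set X) (hC : ∀ γ, IsClub (C γ)) :
    IsClub {x | ∀ γ < x, x ∈ C γ} := by
  constructor
  · intro x hx γ hγ
    refine (hC γ).1 x ⟨⟨γ, hγ⟩, fun a ha => ?_⟩
    obtain ⟨d, hd, h1, h2⟩ := hx.2 (max a γ) (max_lt ha hγ)
    exact ⟨d, hd γ (lt_of_le_of_lt (le_max_right _ _) h1),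
      lt_of_le_of_lt (le_max_left _ _) h1, h2⟩
  · intro a
    obtain ⟨x, hax, hlim, hacc⟩ := master H C (fun y => Set.Iio y)
      (fun i y => (hC i).2 y) (fun y => H.cnt y) (fun y z hyz => Set.Iio_subset_Iio hyz) a
    refine ⟨x, fun γ hγ => (hC γ).1 x ?_, hax⟩
    obtain ⟨c, hc1, hc2⟩ := hlim γ hγ
    exact hacc γ ⟨c, hc2, hc1⟩

/-- Fodor's pressing-down lemma. -/
theorem fodor (H : Amb X) {S : Set X} (hS : IsStat S) (f : X → X)
    (hf : ∀ x ∈ S, f x < x) : ∃ γ, IsStat {x | x ∈ S ∧ f x = γ} := by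
  by_contra hcon
  push_neg at hcon
  have hcl : ∀ γ, ∃ C, IsClub C ∧ {x | x ∈ S ∧ f x = γ} ∩ C = ∅ := by
    intro γ
    have := hcon γ
    rw [IsStat] at this
    push_neg at this
    obtain ⟨C, hC1, hC2⟩ := this
    exact ⟨C, hC1, hC2⟩
  choose C hC1 hC2 using hcl
  obtain ⟨x, hxS, hxD⟩ := hS _ (isClub_diag H C hC1)
  have hfx : f x < x := hf x hxS
  have : x ∈ {y | y ∈ S ∧ f y = f x} ∩ C (f x) := ⟨⟨hxS, rfl⟩, hxD (f x) hfx⟩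
  rw [hC2 (f x)] at this
  exact this

/-- Weak Ulam: a regressive function taking arbitrarily large values on stationary sets. -/
theorem exists_pressing (H : Amb X) :
    ∃ h : X → X, ∀ γ : X, IsStat {x | γ < h x ∧ h x < x} := by
  classical
  have hg : ∀ x : X, ∃ f : (Set.Iio x) → ℕ, Function.Injective f := by
    intro x
    exact (Set.countable_iff_exists_injective).1 (H.cnt x)
  choose g hginj using hg
  set A : X → ℕ → Set X := fun β n => {x | ∃ h : β < x, g x ⟨β, h⟩ = n} with hA
  have step1 : ∀ β, ∃ n, IsStat (A β n) := by
    intro β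
    by_contra hcon
    push_neg at hcon
    have hcl : ∀ n, ∃ C, IsClub C ∧ A β n ∩ C = ∅ := by
      intro n
      have := hcon n
      rw [IsStat] at this
      push_neg at this
      obtain ⟨C, hC1, hC2⟩ := this
      exact ⟨C, hC1, hC2⟩
    choose C hC1 hC2 using hcl
    obtain ⟨c, hc, hcβ⟩ := (isClub_iInter H C hC1).2 β
    have hcmem : c ∈ A β (g c ⟨β, hcβ⟩) := ⟨hcβ, rfl⟩
    have : c ∈ A β (g c ⟨β, hcβ⟩) ∩ C (g c ⟨β, hcβ⟩) :=
      ⟨hcmem, Set.mem_iInter.1 hc _⟩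
    rw [hC2] at this
    exact this
  choose nβ hnβ using step1
  have step2 : ∃ n₀ : ℕ, ∀ y, ∃ β, y < β ∧ nβ β = n₀ := by
    by_contra hcon
    push_neg at hcon
    choose yn hyn using hcon
    obtain ⟨b, hb⟩ := H.sbd (Set.countable_range yn)
    obtain ⟨β, hβ⟩ := H.nomax b
    exact hyn (nβ β) β (lt_trans (hb _ ⟨nβ β, rfl⟩) hβ) rfl
  obtain ⟨n₀, hn₀⟩ := step2
  set h : X → X := fun x => if hx : ∃ β, nβ β = n₀ ∧ x ∈ A β n₀ then hx.choose else x with hh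
  refine ⟨h, fun γ => ?_⟩
  obtain ⟨β, hγβ, hβ0⟩ := hn₀ γ
  refine IsStat.mono ?_ ?_ (S := A β n₀)
  · rw [← hβ0]; exact hnβ β
  intro x hx
  have hex : ∃ β', nβ β' = n₀ ∧ x ∈ A β' n₀ := ⟨β, hβ0, hx⟩
  have hspec := hex.choose_spec
  have huniq : hex.choose = β := by
    obtain ⟨hlt1, hg1⟩ := hspec.2
    obtain ⟨hlt2, hg2⟩ := hx
    have := hginj x (hg1.trans hg2.symm)
    exact Subtype.mk_eq_mk.1 this
  have hxh : h x = β := by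
    rw [hh]
    simp only [dif_pos hex]
    exact huniq
  obtain ⟨hβx, _⟩ := hx
  exact ⟨by rw [hxh]; exact hγβ, by rw [hxh]; exact hβx⟩

/-- The set of limit points is a club. -/
theorem isClub_lim (H : Amb X) : IsClub {x : X | IsAcc Set.univ x} := by
  constructor
  · intro x hx
    exact hx.mono (Set.subset_univ _)
  · intro a
    obtain ⟨x, hax, hlim, _⟩ := master H (fun _ : Unit => (Set.univ : Set X))
      (fun _ => (Set.univ : Set Unit)) (fun _ y => by
        obtain ⟨z, hz⟩ := H.nomax y
        exact ⟨z, trivial, hz⟩) (fun _ => Set.countable_univ) (fun _ _ _ => le_refl _) a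
    refine ⟨x, ⟨⟨a, hax⟩, fun b hb => ?_⟩, hax⟩
    obtain ⟨c, h1, h2⟩ := hlim b hb
    exact ⟨c, trivial, h1, h2⟩

/-- The set of accumulation points of an unbounded set is a club. -/
theorem isClub_acc (H : Amb X) {T : Set X} (hT : ∀ a, ∃ t ∈ T, a < t) :
    IsClub {x : X | IsAcc T x} := by
  constructor
  · intro x hx
    refine ⟨hx.1, fun a ha => ?_⟩
    obtain ⟨c, hc, h1, h2⟩ := hx.2 a ha
    obtain ⟨t, ht, h3, h4⟩ := hc.2 a h1
    exact ⟨t, ht, h3, lt_trans h4 h2⟩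
  · intro a
    obtain ⟨x, hax, _, hacc⟩ := master H (fun _ : Unit => T)
      (fun _ => (Set.univ : Set Unit)) (fun _ y => hT y)
      (fun _ => Set.countable_univ) (fun _ _ _ => le_refl _) a
    exact ⟨x, hacc Unit.unit ⟨a, hax, trivial⟩, hax⟩

section Top

variable [TopologicalSpace X] [OrderTopology X]

theorem Ioc_mem_nhds (H : Amb X) {a x : X} (hax : a < x) : Set.Ioc a x ∈ nhds x := by
  have hne : (Set.Ioi x).Nonempty := H.nomax x
  set x' := H.wf.min (Set.Ioi x) hne with hx'
  have hxx' : x < x' := H.wf.min_mem (Set.Ioi x) hne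
  have hIic : Set.Iic x = Set.Iio x' := by
    ext y
    constructor
    · intro hy; exact lt_of_le_of_lt hy hxx'
    · intro hy
      by_contra hc
      exact H.wf.not_lt_min (Set.Ioi x) (lt_of_not_ge hc) hy
  have hopen : IsOpen (Set.Ioc a x) := by
    rw [← Set.Ioi_inter_Iic, hIic]
    exact isOpen_Ioi.inter isOpen_Iio
  exact hopen.mem_nhds ⟨hax, le_refl x⟩

/-- The main combinatorial theorem, abstractly. -/
theorem main (H : Amb X) :
    ∃ U : Set (X × X), IsNbhdAssignment U ∧
      ∀ V : Set (X × X), IsNbhdAssignment V → ¬ rcomp V V ⊆ U := by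
  classical
  obtain ⟨h, hstat⟩ := exists_pressing H
  refine ⟨{p : X × X | h p.1 < p.1 → p.2 ∈ Set.Ioc (h p.1) p.1}, ?_, ?_⟩
  · intro x
    by_cases hx : h x < x
    · exact Filter.mem_of_superset (Ioc_mem_nhds H hx) (fun y hy => fun _ => hy)
    · exact Filter.univ_mem' (fun y => fun hc => absurd hc hx)
  · intro V hV hVV
    set f : X → X := fun x =>
      if hx : ∃ l, l < x ∧ Set.Ioc l x ⊆ {y | (x, y) ∈ V} then hx.choose else x with hf
    have hfspec : ∀ x : X, (∃ a, a < x) → f x < x ∧ Set.Ioc (f x) x ⊆ {y | (x, y) ∈ V} := by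
      rintro x ⟨a, ha⟩
      have hex : ∃ l, l < x ∧ Set.Ioc l x ⊆ {y | (x, y) ∈ V} := by
        obtain ⟨l, hl1, hl2⟩ := exists_Ioc_subset_of_mem_nhds (hV x) ⟨a, ha⟩
        exact ⟨l, hl1, hl2⟩
      rw [hf]
      simp only [dif_pos hex]
      exact hex.choose_spec
    set Lim : Set X := {x : X | IsAcc Set.univ x} with hLim
    have hLimStat : IsStat Lim := (isClub_lim H).isStat H
    obtain ⟨γ, hγ⟩ := fodor H hLimStat f (fun x hx => (hfspec x hx.1).1)
    set T : Set X := {x | x ∈ Lim ∧ f x = γ} with hT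
    have hW := hstat γ
    have hTu : ∀ a, ∃ t ∈ T, a < t := hγ.unbdd H
    obtain ⟨x₀, ⟨hγh, hhx⟩, hxacc⟩ := hW _ (isClub_acc H hTu)
    have hx₀lim : (∃ a, a < x₀) := hxacc.1
    obtain ⟨hfx₀, hIocx₀⟩ := hfspec x₀ hx₀lim
    have hmax : max (f x₀) (h x₀) < x₀ := max_lt hfx₀ hhx
    obtain ⟨y, hyT, hy1, hy2⟩ := hxacc.2 _ hmax
    obtain ⟨hylim, hfy⟩ := hyT
    obtain ⟨hfyy, hIocy⟩ := hfspec y hylim.1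
    have h1 : (x₀, y) ∈ V := hIocx₀ ⟨lt_of_le_of_lt (le_max_left _ _) hy1, le_of_lt hy2⟩
    have h2 : (y, h x₀) ∈ V := by
      apply hIocy
      rw [hfy]
      exact ⟨hγh, le_of_lt (lt_of_le_of_lt (le_max_right _ _) hy1)⟩
    have hmem : (x₀, h x₀) ∈ rcomp V V := ⟨y, h1, h2⟩
    have := hVV hmem hhx
    exact absurd this.1 (lt_irrefl _)

end Top

end Stmt11

namespace Stmt11

/-- On `X = ω₁` with the order topology there is a neighborhood assignment `U` such
that no neighborhood assignment `V` satisfies `VV ⊆ U`; hence the universal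
pre-uniformity of `ω₁` is not equal to its square. -/
theorem omega1_preUniformity_ne_square
    (X : Type*) [LinearOrder X] [TopologicalSpace X] [OrderTopology X]
    (e : X ≃o Set.Iio (Cardinal.aleph 1).ord) :
    ∃ U : Set (X × X), IsNbhdAssignment U ∧
      ∀ V : Set (X × X), IsNbhdAssignment V → ¬ rcomp V V ⊆ U := by
  set o := (Cardinal.aleph 1).ord with ho
  have holim : Order.IsSuccLimit o := Cardinal.isSuccLimit_ord (Cardinal.aleph0_le_aleph 1)
  have H : Amb X := by
    constructor
    · -- well-founded
      have hq : WellFounded (InvImage ((· < ·) : Ordinal → Ordinal → Prop)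
          (fun x : X => ((e x : Set.Iio o) : Ordinal))) :=
        InvImage.wf _ Ordinal.lt_wf
      exact Subrelation.wf (fun {x y} hxy => Subtype.coe_lt_coe.2 (e.lt_iff_lt.2 hxy)) hq
    · -- countable initial segments
      intro x
      rw [← Set.countable_coe_iff]
      have hcnt2 : Countable (Set.Iio ((e x : Set.Iio o) : Ordinal)) := by
        have hβ : ((e x : Set.Iio o) : Ordinal).card < Cardinal.aleph 1 :=
          Cardinal.lt_ord.1 (e x).2
        have hβ0 : ((e x : Set.Iio o) : Ordinal).card ≤ Cardinal.aleph0 := by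
          rw [← Cardinal.succ_aleph0] at hβ
          exact Order.lt_succ_iff.1 hβ
        rw [← Cardinal.mk_le_aleph0_iff, Ordinal.mk_Iio_ordinal, Cardinal.lift_le_aleph0]
        exact hβ0
      have hf : Function.Injective (fun y : Set.Iio x =>
          (⟨((e y.1 : Set.Iio o) : Ordinal), Subtype.coe_lt_coe.2 (e.lt_iff_lt.2 y.2)⟩ :
            Set.Iio ((e x : Set.Iio o) : Ordinal))) := by
        intro y z hyz
        have : ((e y.1 : Set.Iio o) : Ordinal) = ((e z.1 : Set.Iio o) : Ordinal) := by
          have h2 := congrArg Subtype.val hyz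
          simpa using h2
        exact Subtype.coe_injective (e.injective (Subtype.coe_injective this))
      exact Function.Injective.countable hf
    · -- uncountable
      intro hcnt
      rw [Set.countable_univ_iff] at hcnt
      have : Countable (Set.Iio o) := Countable.of_equiv X e.toEquiv
      rw [← Cardinal.mk_le_aleph0_iff, Ordinal.mk_Iio_ordinal, Cardinal.card_ord,
        Cardinal.lift_le_aleph0] at this
      exact absurd this Cardinal.aleph0_lt_aleph_one.not_ge
    · -- no maximum
      intro x
      have hsucc : Order.succ ((e x : Set.Iio o) : Ordinal) < o := holim.succ_lt (e x).2
      refine ⟨e.symm ⟨Order.succ ((e x : Set.Iio o) : Ordinal), hsucc⟩, ?_⟩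
      have hlt : e x < (⟨Order.succ ((e x : Set.Iio o) : Ordinal), hsucc⟩ : Set.Iio o) :=
        Subtype.coe_lt_coe.1
          (show ((e x : Set.Iio o) : Ordinal) < Order.succ ((e x : Set.Iio o) : Ordinal) from
            Order.lt_succ _)
      have h3 := e.symm.lt_iff_lt.2 hlt
      rwa [e.symm_apply_apply] at h3
  exact main H

end Stmt11
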